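/- Let μ > 0 and μ_K > 0 be reals, and let A (m × r), B (n × r), X̃ (m × n), Λ (m × n), R (r × r), Y (r × r) be real matrices. Define f(K) = ⟨Λ, X̃ − A K Bᵀ⟩ + (μ/2)‖X̃ − A K Bᵀ‖_F² + ⟨Y, R − K⟩ + (μ_K/2)‖R − K‖_F² for K an r × r real matrix, where ⟨M, N⟩ = Σ_{i,j} M_{i,j} N_{i,j}. Then an r × r matrix K₀ minimizes f over all r × r matrices if and only if K₀ satisfies the Stein equation μ_K K₀ + μ AᵀA K₀ BᵀB = Aᵀ(Λ + μ X̃)B + μ_K R + Y. -/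

import Mathlib

open Matrix

/-- The trace inner product `⟨M, N⟩ = Σ_{i,j} M_{i,j} N_{i,j}` on real matrices. -/
def matInner {m n : Type*} [Fintype m] [Fintype n] (M N : Matrix m n ℝ) : ℝ :=
  ∑ i, ∑ j, M i j * N i j

/-- The squared Frobenius norm `‖M‖_F² = Σ_{i,j} M_{i,j}²`. -/
def frobSq {m n : Type*} [Fintype m] [Fintype n] (M : Matrix m n ℝ) : ℝ :=
  ∑ i, ∑ j, (M i j) ^ 2

section Aux
variable {m n r : Type*} [Fintype m] [Fintype n] [Fintype r]

lemma matInner_eq_trace (M N : Matrix m n ℝ) : matInner M N = Matrix.trace (Mᵀ * N) := by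
  simp [matInner, Matrix.trace, Matrix.mul_apply, Matrix.diag]
  exact Finset.sum_comm

lemma matInner_adj (M : Matrix m n ℝ) (A : Matrix m r ℝ) (B : Matrix n r ℝ)
    (H : Matrix r r ℝ) : matInner M (A * H * Bᵀ) = matInner (Aᵀ * M * B) H := by
  rw [matInner_eq_trace, matInner_eq_trace]
  rw [show (Aᵀ * M * B)ᵀ = Bᵀ * Mᵀ * A by simp [Matrix.transpose_mul, Matrix.mul_assoc]]
  rw [show Mᵀ * (A * H * Bᵀ) = (Mᵀ * A * H) * Bᵀ by simp [Matrix.mul_assoc]]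
  rw [Matrix.trace_mul_comm]
  simp [Matrix.mul_assoc]

lemma matInner_sub_right (M N P : Matrix m n ℝ) :
    matInner M (N - P) = matInner M N - matInner M P := by
  simp [matInner, Matrix.sub_apply, mul_sub, Finset.sum_sub_distrib]

lemma matInner_add_right (M N P : Matrix m n ℝ) :
    matInner M (N + P) = matInner M N + matInner M P := by
  simp [matInner, Matrix.add_apply, mul_add, Finset.sum_add_distrib]

lemma matInner_add_left (M N P : Matrix m n ℝ) :
    matInner (M + N) P = matInner M P + matInner N P := by
  simp [matInner, Matrix.add_apply, add_mul, Finset.sum_add_distrib]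

lemma matInner_sub_left (M N P : Matrix m n ℝ) :
    matInner (M - N) P = matInner M P - matInner N P := by
  simp [matInner, Matrix.sub_apply, sub_mul, Finset.sum_sub_distrib]

lemma matInner_smul_left (c : ℝ) (M N : Matrix m n ℝ) :
    matInner (c • M) N = c * matInner M N := by
  simp [matInner, Matrix.smul_apply, Finset.mul_sum, mul_assoc]

lemma matInner_smul_right (c : ℝ) (M N : Matrix m n ℝ) :
    matInner M (c • N) = c * matInner M N := by
  simp [matInner, Matrix.smul_apply, Finset.mul_sum]
  congr 1; ext i; congr 1; ext j; ring

lemma matInner_self (M : Matrix m n ℝ) : matInner M M = frobSq M := by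
  simp [matInner, frobSq, sq]

lemma frobSq_sub (M N : Matrix m n ℝ) :
    frobSq (M - N) = frobSq M - 2 * matInner M N + frobSq N := by
  simp only [frobSq, matInner, Matrix.sub_apply, Finset.mul_sum,
    ← Finset.sum_add_distrib, ← Finset.sum_sub_distrib]
  exact Finset.sum_congr rfl fun i _ => Finset.sum_congr rfl fun j _ => by ring

lemma frobSq_nonneg (M : Matrix m n ℝ) : 0 ≤ frobSq M :=
  Finset.sum_nonneg fun i _ => Finset.sum_nonneg fun j _ => sq_nonneg _

lemma frobSq_smul (c : ℝ) (M : Matrix m n ℝ) : frobSq (c • M) = c ^ 2 * frobSq M := by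
  simp [frobSq, Matrix.smul_apply, mul_pow, Finset.mul_sum]

lemma frobSq_eq_zero {M : Matrix m n ℝ} (h : frobSq M = 0) : M = 0 := by
  ext i j
  have h1 := (Finset.sum_eq_zero_iff_of_nonneg (fun i _ => Finset.sum_nonneg fun j _ => sq_nonneg (M i j))).1 h i (Finset.mem_univ i)
  have h2 := (Finset.sum_eq_zero_iff_of_nonneg (fun j _ => sq_nonneg (M i j))).1 h1 j (Finset.mem_univ j)
  simpa using pow_eq_zero_iff (n := 2) (by norm_num) |>.1 h2

lemma expansion (μ μK : ℝ) (A : Matrix m r ℝ) (B : Matrix n r ℝ) (Xt Λ : Matrix m n ℝ)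
    (R Y K₀ K : Matrix r r ℝ) :
    matInner Λ (Xt - A * K * Bᵀ) + (μ / 2) * frobSq (Xt - A * K * Bᵀ)
      + matInner Y (R - K) + (μK / 2) * frobSq (R - K)
    = (matInner Λ (Xt - A * K₀ * Bᵀ) + (μ / 2) * frobSq (Xt - A * K₀ * Bᵀ)
      + matInner Y (R - K₀) + (μK / 2) * frobSq (R - K₀))
      - matInner (Aᵀ * (Λ + μ • Xt) * B + μK • R + Y
          - (μK • K₀ + μ • (Aᵀ * A * K₀ * (Bᵀ * B)))) (K - K₀)
      + (μ / 2) * frobSq (A * (K - K₀) * Bᵀ) + (μK / 2) * frobSq (K - K₀) := by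
  have e1 : Xt - A * K * Bᵀ = (Xt - A * K₀ * Bᵀ) - A * (K - K₀) * Bᵀ := by
    simp only [Matrix.mul_sub, Matrix.sub_mul]; abel
  have e2 : R - K = (R - K₀) - (K - K₀) := by abel
  rw [e1, e2, frobSq_sub, frobSq_sub (R - K₀),
    matInner_sub_right Λ, matInner_sub_right Y, matInner_adj, matInner_adj]
  simp only [Matrix.mul_add, Matrix.add_mul, Matrix.mul_sub, Matrix.sub_mul,
    Matrix.mul_smul, Matrix.smul_mul, Matrix.mul_assoc,
    matInner_sub_left, matInner_add_left, matInner_smul_left,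
    matInner_sub_right, matInner_add_right, matInner_smul_right]
  ring

end Aux

/-- A matrix `K₀` minimizes the ADMM objective
`f(K) = ⟨Λ, X̃ − A K Bᵀ⟩ + (μ/2)‖X̃ − A K Bᵀ‖_F² + ⟨Y, R − K⟩ + (μ_K/2)‖R − K‖_F²`
if and only if it satisfies the Stein equation
`μ_K K₀ + μ AᵀA K₀ BᵀB = Aᵀ(Λ + μ X̃) B + μ_K R + Y`. -/
theorem admm_split_update_iff_stein {m n r : Type*} [Fintype m] [Fintype n] [Fintype r]
    (μ μK : ℝ) (hμ : 0 < μ) (hμK : 0 < μK)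
    (A : Matrix m r ℝ) (B : Matrix n r ℝ) (Xt Λ : Matrix m n ℝ)
    (R Y : Matrix r r ℝ)
    (f : Matrix r r ℝ → ℝ)
    (hf : ∀ K, f K = matInner Λ (Xt - A * K * Bᵀ) + (μ / 2) * frobSq (Xt - A * K * Bᵀ)
      + matInner Y (R - K) + (μK / 2) * frobSq (R - K))
    (K₀ : Matrix r r ℝ) :
    (∀ K, f K₀ ≤ f K) ↔
      μK • K₀ + μ • (Aᵀ * A * K₀ * (Bᵀ * B)) = Aᵀ * (Λ + μ • Xt) * B + μK • R + Y := by
  set G := Aᵀ * (Λ + μ • Xt) * B + μK • R + Y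
      - (μK • K₀ + μ • (Aᵀ * A * K₀ * (Bᵀ * B))) with hGdef
  have key : ∀ K, f K = f K₀ - matInner G (K - K₀)
      + (μ / 2) * frobSq (A * (K - K₀) * Bᵀ) + (μK / 2) * frobSq (K - K₀) := by
    intro K
    rw [hf K, hf K₀, hGdef]
    exact expansion μ μK A B Xt Λ R Y K₀ K
  constructor
  · intro hmin
    set g := frobSq G with hg
    set a := frobSq (A * G * Bᵀ) with ha
    have hc : 0 ≤ (μ / 2) * a + (μK / 2) * g := by
      have := frobSq_nonneg G; have := frobSq_nonneg (A * G * Bᵀ)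
      positivity
    have ht : ∀ t : ℝ, 0 < t → g ≤ t * ((μ / 2) * a + (μK / 2) * g) := by
      intro t htpos
      have h := hmin (K₀ + t • G)
      rw [key (K₀ + t • G), add_sub_cancel_left] at h
      rw [matInner_smul_right, matInner_self, ← hg] at h
      rw [show A * (t • G) * Bᵀ = t • (A * G * Bᵀ) by
        rw [Matrix.mul_smul, Matrix.smul_mul]] at h
      rw [frobSq_smul, frobSq_smul, ← ha, ← hg] at h
      have h2 : t * g ≤ t ^ 2 * ((μ / 2) * a + (μK / 2) * g) := by nlinarith
      exact (mul_le_mul_iff_right₀ htpos).mp (by nlinarith [h2])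
    have hg0 : g = 0 := by
      by_contra hne
      have hgpos : 0 < g := lt_of_le_of_ne (hg ▸ frobSq_nonneg G) (Ne.symm hne)
      have hcpos : 0 < (μ / 2) * a + (μK / 2) * g := by
        have := frobSq_nonneg (A * G * Bᵀ); nlinarith
      have := ht (g / (2 * ((μ / 2) * a + (μK / 2) * g))) (by positivity)
      rw [div_mul_eq_mul_div, mul_comm] at this
      have heq2 : ((μ / 2) * a + (μK / 2) * g) * g / (2 * ((μ / 2) * a + (μK / 2) * g)) = g / 2 := by
        rw [div_eq_iff (ne_of_gt (by positivity : (0:ℝ) < 2 * ((μ / 2) * a + (μK / 2) * g)))]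
        ring
      rw [heq2] at this
      linarith
    have hG0 : G = 0 := frobSq_eq_zero hg0
    have := sub_eq_zero.mp (hGdef ▸ hG0)
    exact this.symm
  · intro heq K
    have hG0 : G = 0 := by rw [hGdef, sub_eq_zero, heq]
    rw [key K, hG0]
    have h1 := frobSq_nonneg (A * (K - K₀) * Bᵀ)
    have h2 := frobSq_nonneg (K - K₀)
    have h3 : matInner (0 : Matrix r r ℝ) (K - K₀) = 0 := by
      simp [matInner]
    rw [h3]
    nlinarith
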